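/- For every integer $g \geq 2$, the sum $\sum_{j=0}^{g} (j+1)(-1)^j (2g-2)^{2j} 2^{g-j}$ is non-zero. -/
import Mathlib


/-- For every integer `g ≥ 2`, the sum `∑_{j=0}^{g} (j+1)(-1)^j (2g-2)^(2j) 2^(g-j)`
is non-zero. -/
theorem stmt3 (g : ℕ) (hg : 2 ≤ g) :
    ∑ j ∈ Finset.range (g + 1),
      ((j : ℚ) + 1) * (-1) ^ j * (2 * (g : ℚ) - 2) ^ (2 * j) * 2 ^ (g - j) ≠ 0 := by
  have key : (∑ j ∈ Finset.range (g + 1),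
      ((j : ℤ) + 1) * (-1) ^ j * (2 * (g : ℤ) - 2) ^ (2 * j) * 2 ^ (g - j)) ≠ 0 := by
    have hsplit : (∑ j ∈ Finset.range (g + 1),
        ((j : ℤ) + 1) * (-1) ^ j * (2 * (g : ℤ) - 2) ^ (2 * j) * 2 ^ (g - j))
        = (∑ j ∈ Finset.range g,
            (((j : ℤ) + 1) + 1) * (-1) ^ (j + 1) * (2 * (g : ℤ) - 2) ^ (2 * (j + 1))
              * 2 ^ (g - (j + 1))) + 2 ^ g := by
      rw [Finset.sum_range_succ' (fun j => ((j : ℤ) + 1) * (-1) ^ j * (2 * (g : ℤ) - 2) ^ (2 * j) * 2 ^ (g - j))]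
      push_cast
      simp
    have hdvd : (2 : ℤ) ^ (g + 1) ∣ ∑ j ∈ Finset.range g,
        (((j : ℤ) + 1) + 1) * (-1) ^ (j + 1) * (2 * (g : ℤ) - 2) ^ (2 * (j + 1))
          * 2 ^ (g - (j + 1)) := by
      apply Finset.dvd_sum
      intro j hj
      have hjg : j + 1 ≤ g := Finset.mem_range.mp hj
      have h2 : (2 * (g : ℤ) - 2) ^ (2 * (j + 1)) = 2 ^ (2 * (j + 1)) * ((g : ℤ) - 1) ^ (2 * (j + 1)) := by
        rw [← mul_pow]; ring_nf
      have hexp : g + 1 ≤ 2 * (j + 1) + (g - (j + 1)) := by omega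
      have hd : (2 : ℤ) ^ (g + 1) ∣ 2 ^ (2 * (j + 1)) * 2 ^ (g - (j + 1)) := by
        rw [← pow_add]; exact pow_dvd_pow 2 hexp
      calc (2 : ℤ) ^ (g + 1) ∣ (2 ^ (2 * (j + 1)) * 2 ^ (g - (j + 1))) := hd
        _ ∣ (((j : ℤ) + 1) + 1) * (-1) ^ (j + 1) * (2 * (g : ℤ) - 2) ^ (2 * (j + 1))
              * 2 ^ (g - (j + 1)) := by
            rw [h2]
            exact ⟨(((j : ℤ) + 1) + 1) * (-1) ^ (j + 1) * ((g : ℤ) - 1) ^ (2 * (j + 1)), by ring⟩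
    intro h0
    rw [hsplit] at h0
    have h2g : (2 : ℤ) ^ (g + 1) ∣ 2 ^ g := by
      have : (2 : ℤ) ^ g = -(∑ j ∈ Finset.range g,
          (((j : ℤ) + 1) + 1) * (-1) ^ (j + 1) * (2 * (g : ℤ) - 2) ^ (2 * (j + 1))
            * 2 ^ (g - (j + 1))) := by linarith
      rw [this]
      exact dvd_neg.mpr hdvd
    have hle : (2 : ℤ) ^ (g + 1) ≤ 2 ^ g := Int.le_of_dvd (by positivity) h2g
    have hlt : (2 : ℤ) ^ g < 2 ^ (g + 1) := by
      apply pow_lt_pow_right₀ (by norm_num) (by omega)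
    linarith
  intro h
  apply key
  have : ((∑ j ∈ Finset.range (g + 1),
      ((j : ℤ) + 1) * (-1) ^ j * (2 * (g : ℤ) - 2) ^ (2 * j) * 2 ^ (g - j) : ℤ) : ℚ) = 0 := by
    push_cast
    exact h
  exact_mod_cast this
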